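/- Let σ be a permutation of Fin n, A ∈ Matrix (Fin n) (Fin n) ℂ, λ ∈ ℂ, and x : Fin n → ℂ with A.mulVec x = λ • x. Define w : Fin n × Fin n → ℂ by w(j,p) = x(j) if p = σ(j) and w(j,p) = 0 otherwise. Then ρ[A,σ].mulVec w = λ • w; moreover, for any permutation τ completely different from σ and any B ∈ Matrix (Fin n) (Fin n) ℂ, ρ[B,τ].mulVec w = 0. -/
import Mathlib


/-- The CDP matrix of `A` and a permutation `σ`. -/
def cdpMatrix {n : ℕ} (A : Matrix (Fin n) (Fin n) ℂ) (σ : Equiv.Perm (Fin n)) :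
    Matrix (Fin n × Fin n) (Fin n × Fin n) ℂ :=
  Matrix.of fun x y => if x.2 = σ x.1 ∧ y.2 = σ y.1 then A x.1 y.1 else 0

/-- If `x` is an eigenvector of `A` with eigenvalue `λ`, then
`w(j,p) = x j` if `p = σ j` (and `0` otherwise) is an eigenvector of `ρ[A,σ]` with the
same eigenvalue, and `w` is annihilated by `ρ[B,τ]` for any `τ` completely different
from `σ`. -/
theorem cdpMatrix_eigenvector {n : ℕ} (σ : Equiv.Perm (Fin n))
    (A : Matrix (Fin n) (Fin n) ℂ) (lam : ℂ) (x : Fin n → ℂ)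
    (hx : A.mulVec x = lam • x) :
    (cdpMatrix A σ).mulVec (fun p => if p.2 = σ p.1 then x p.1 else 0) =
      lam • (fun p => if p.2 = σ p.1 then x p.1 else 0) ∧
    (∀ τ : Equiv.Perm (Fin n), (∀ i, σ i ≠ τ i) → ∀ B : Matrix (Fin n) (Fin n) ℂ,
      (cdpMatrix B τ).mulVec (fun p => if p.2 = σ p.1 then x p.1 else 0) = 0) := by
  constructor
  · funext ip
    obtain ⟨i, p⟩ := ip
    have hxi := congrFun hx i
    simp only [Matrix.mulVec, dotProduct, cdpMatrix, Matrix.of_apply,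
      Fintype.sum_prod_type, Pi.smul_apply, smul_eq_mul] at hxi ⊢
    by_cases hp : p = σ i
    · simp only [hp, true_and, if_pos rfl]
      rw [if_pos trivial, ← hxi]
      refine Finset.sum_congr rfl fun j _ => ?_
      rw [show (∑ q : Fin n, (if q = σ j then A i j else 0) * if q = σ j then x j else 0)
          = ∑ q : Fin n, if q = σ j then A i j * x j else 0 by
        exact Finset.sum_congr rfl fun q _ => by by_cases h : q = σ j <;> simp [h]]
      rw [Finset.sum_ite_eq' Finset.univ (σ j)]
      simp
    · simp [hp]
  · intro τ hστ B
    funext ip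
    obtain ⟨i, p⟩ := ip
    simp only [Matrix.mulVec, dotProduct, cdpMatrix, Matrix.of_apply,
      Fintype.sum_prod_type, Pi.zero_apply]
    refine Finset.sum_eq_zero fun j _ => Finset.sum_eq_zero fun q _ => ?_
    by_cases hq : q = σ j
    · have : q ≠ τ j := hq ▸ hστ j
      simp [this]
    · simp [hq]
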